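/- Let n ∈ ℕ, let a_1, …, a_l ∈ ℝ be pairwise distinct points, and let d_1, …, d_l ∈ ℕ with d_i ≤ n for each i. Then the quotient space U_n / ∑_{i=1}^l (u−a_i)^{d_i}·U_{n−d_i} has dimension max( 0 , n+1 − ∑_{i=1}^l (n−d_i+1) ). -/

import Mathlib

open Polynomial Module Submodule Finset

namespace AuxSP

/-- The "Wronskian-like" polynomial for the apolar pairing at level `n`. -/
noncomputable def Wpoly (n : ℕ) (p q : ℝ[X]) : ℝ[X] :=
  ∑ j ∈ Finset.range (n+1), C ((-1:ℝ)^j) * (derivative^[j] p * derivative^[n-j] q)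

/-- The apolar-type bilinear pairing on polynomials. -/
noncomputable def Braw (n : ℕ) : ℝ[X] →ₗ[ℝ] ℝ[X] →ₗ[ℝ] ℝ :=
  ∑ j ∈ Finset.range (n+1),
    ((-1:ℝ)^j) • (((LinearMap.mul ℝ ℝ[X]).compl₁₂
        ((Polynomial.derivative : ℝ[X] →ₗ[ℝ] ℝ[X]) ^ j)
        ((Polynomial.derivative : ℝ[X] →ₗ[ℝ] ℝ[X]) ^ (n-j))).compr₂ (Polynomial.leval 0))

lemma Braw_apply (n : ℕ) (p q : ℝ[X]) :
    Braw n p q = ∑ j ∈ Finset.range (n+1),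
      (-1:ℝ)^j * (eval 0 (derivative^[j] p) * eval 0 (derivative^[n-j] q)) := by
  simp [Braw, LinearMap.sum_apply, LinearMap.smul_apply, LinearMap.compr₂_apply,
    LinearMap.compl₁₂_apply, LinearMap.mul_apply', leval_apply, Module.End.pow_apply,
    smul_eq_mul, eval_mul]

lemma Braw_eq_eval_Wpoly (n : ℕ) (p q : ℝ[X]) (x : ℝ) :
    eval x (Wpoly n p q) = ∑ j ∈ Finset.range (n+1),
      (-1:ℝ)^j * (eval x (derivative^[j] p) * eval x (derivative^[n-j] q)) := by
  simp [Wpoly, eval_finset_sum, eval_mul]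

lemma Braw_eq_W0 (n : ℕ) (p q : ℝ[X]) : Braw n p q = eval 0 (Wpoly n p q) := by
  rw [Braw_apply, Braw_eq_eval_Wpoly]

lemma derivative_Wpoly (n : ℕ) (p q : ℝ[X]) (hp : p.natDegree ≤ n) (hq : q.natDegree ≤ n) :
    derivative (Wpoly n p q) = 0 := by
  set F : ℕ → ℝ[X] := fun j => C ((-1:ℝ)^j) * (derivative^[j] p * derivative^[(n+1)-j] q) with hF
  have key : derivative (Wpoly n p q) = ∑ j ∈ Finset.range (n+1), (F j - F (j+1)) := by
    rw [Wpoly, derivative_sum]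
    refine Finset.sum_congr rfl fun j hj => ?_
    have hjn : j ≤ n := Nat.lt_succ_iff.mp (Finset.mem_range.mp hj)
    have h1 : (n+1) - (j+1) = n - j := by omega
    have h2 : (n - j) + 1 = (n+1) - j := by omega
    rw [derivative_C_mul, derivative_mul]
    rw [hF]
    simp only [h1]
    rw [← Function.iterate_succ_apply' Polynomial.derivative j p,
      ← Function.iterate_succ_apply' Polynomial.derivative (n-j) q]
    simp only [Nat.succ_eq_add_one, h2]
    rw [pow_succ, map_mul, map_neg, map_one]
    ring
  rw [key, Finset.sum_range_sub']
  have hA : derivative^[n] (derivative q) = 0 := by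
    rw [← Function.iterate_succ_apply]
    exact iterate_derivative_eq_zero (by omega)
  have hB : derivative^[n] (derivative p) = 0 := by
    rw [← Function.iterate_succ_apply]
    exact iterate_derivative_eq_zero (by omega)
  simp [hF, hA, hB, Function.iterate_succ_apply]

lemma Braw_eq_eval (n : ℕ) (p q : ℝ[X]) (hp : p.natDegree ≤ n) (hq : q.natDegree ≤ n) (x : ℝ) :
    Braw n p q = eval x (Wpoly n p q) := by
  rw [Braw_eq_W0]
  obtain ⟨c, hc⟩ : ∃ c, Wpoly n p q = C c :=
    ⟨_, eq_C_of_derivative_eq_zero (derivative_Wpoly n p q hp hq)⟩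
  simp [hc]


/-- dividing out `X - C a` powers under iterated differentiation -/
lemma pow_sub_dvd_iterate_derivative (a : ℝ) (j : ℕ) :
    ∀ (w : ℝ[X]) (k : ℕ), (X - C a)^k ∣ w → (X - C a)^(k - j) ∣ derivative^[j] w := by
  induction j with
  | zero => intro w k hw; simpa using hw
  | succ j ih =>
    intro w k hw
    rw [Function.iterate_succ_apply]
    have hstep : (X - C a)^(k-1) ∣ derivative w := by
      obtain ⟨u, rfl⟩ := hw
      rw [derivative_mul, derivative_X_sub_C_pow]
      exact dvd_add (((dvd_refl ((X - C a)^(k-1))).mul_left (C (k:ℝ))).mul_right u)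
        ((pow_dvd_pow (X - C a) (by omega)).mul_right (derivative u))
    have := ih (derivative w) (k-1) hstep
    exact dvd_trans (pow_dvd_pow _ (by omega)) this

lemma eval_iterate_derivative_eq_zero {a : ℝ} {k j : ℕ} (hj : j < k) (r : ℝ[X]) :
    eval a (derivative^[j] ((X - C a)^k * r)) = 0 := by
  have hdvd : (X - C a)^(k-j) ∣ derivative^[j] ((X - C a)^k * r) :=
    pow_sub_dvd_iterate_derivative a j _ k (Dvd.intro _ rfl)
  exact eval_eq_zero_of_dvd_of_eval_eq_zero
    (dvd_trans (dvd_pow_self (X - C a) (show k - j ≠ 0 by omega)) hdvd) (by simp)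

/-- the key orthogonality lemma -/
lemma Braw_eq_zero {n : ℕ} {a : ℝ} {k m : ℕ} {r s : ℝ[X]} (hkm : n < k + m)
    (hp : ((X - C a)^k * r).natDegree ≤ n) (hq : ((X - C a)^m * s).natDegree ≤ n) :
    Braw n ((X - C a)^k * r) ((X - C a)^m * s) = 0 := by
  rw [Braw_eq_eval n _ _ hp hq a, Braw_eq_eval_Wpoly]
  refine Finset.sum_eq_zero fun j hj => ?_
  have hjn : j ≤ n := Nat.lt_succ_iff.mp (Finset.mem_range.mp hj)
  rcases lt_or_ge j k with h | h
  · rw [eval_iterate_derivative_eq_zero h]; ring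
  · rw [eval_iterate_derivative_eq_zero (show n - j < m by omega)]; ring

lemma Braw_flip (n : ℕ) (p q : ℝ[X]) : Braw n q p = (-1:ℝ)^n * Braw n p q := by
  rw [Braw_apply, Braw_apply, Finset.mul_sum]
  rw [← Finset.sum_range_reflect]
  refine Finset.sum_congr rfl fun j hj => ?_
  have hjn : j ≤ n := Nat.lt_succ_iff.mp (Finset.mem_range.mp hj)
  have h1 : n + 1 - 1 - j = n - j := by omega
  have h2 : n - (n - j) = j := by omega
  have h3 : (-1:ℝ)^(n-j) * (-1:ℝ)^j = (-1:ℝ)^n := by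
    rw [← pow_add]; congr 1; omega
  have h4 : (-1:ℝ)^j * (-1:ℝ)^j = 1 := by
    rw [← pow_add]; exact Even.neg_one_pow ⟨j, rfl⟩
  rw [h1, h2]
  linear_combination (eval 0 (derivative^[j] p) * eval 0 (derivative^[n-j] q)) *
    ((-1:ℝ)^j * h3 - (-1:ℝ)^(n-j) * h4)

lemma Braw_eq_zero_right {n : ℕ} {x : ℝ[X]} (hx : x.degree ≤ (n : WithBot ℕ))
    (h : ∀ y : ℝ[X], y.degree ≤ (n : WithBot ℕ) → Braw n x y = 0) : x = 0 := by
  have hcoeff : ∀ m : ℕ, m ≤ n → x.coeff m = 0 := by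
    intro m hm
    have hy : (X^(n-m) : ℝ[X]).degree ≤ (n : WithBot ℕ) := by
      simpa using (degree_X_pow_le (R := ℝ) (n-m)).trans (by exact_mod_cast Nat.cast_le.mpr (by omega))
    have h0 := h _ hy
    rw [Braw_apply] at h0
    rw [Finset.sum_eq_single (n - (n-m))] at h0
    · rw [show n - (n - m) = m by omega] at h0
      have hD : (derivative^[n-m] (X^(n-m) : ℝ[X])) = ((n-m).descFactorial (n-m) : ℝ[X]) * X^((n-m)-(n-m)) :=
        iterate_derivative_X_pow_eq_natCast_mul (n-m) (n-m)
      rw [show n - m - (n - m) = 0 from by omega] at hD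
      have hfac : eval 0 (derivative^[n - m] (X^(n-m):ℝ[X])) = ((n-m).factorial : ℝ) := by
        rw [hD]; simp [Nat.descFactorial_self]
      rw [hfac] at h0
      have hne1 : ((-1:ℝ)^m) ≠ 0 := by positivity
      have hne2 : (((n-m).factorial : ℝ)) ≠ 0 := by
        exact_mod_cast Nat.factorial_ne_zero _
      have hev : eval 0 (derivative^[m] x) = 0 := by
        rcases mul_eq_zero.mp h0 with h' | h'
        · exact absurd h' hne1
        · exact (mul_eq_zero.mp h').resolve_right hne2
      rw [← coeff_zero_eq_eval_zero, coeff_iterate_derivative] at hev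
      simp only [Nat.zero_add, zero_add, nsmul_eq_mul] at hev
      have hne3 : ((m.descFactorial m : ℝ)) ≠ 0 := by
        rw [Nat.descFactorial_self]
        exact_mod_cast Nat.factorial_ne_zero _
      exact (mul_eq_zero.mp hev).resolve_left hne3
    · intro j hjr hne
      have hjn : j ≤ n := Nat.lt_succ_iff.mp (Finset.mem_range.mp hjr)
      have hD := iterate_derivative_X_pow_eq_natCast_mul (R := ℝ) (n-m) (n-j)
      rcases lt_or_ge (n-m) (n-j) with hlt | hge
      · rw [hD, Nat.descFactorial_eq_zero_iff_lt.mpr hlt]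
        simp
      · rw [hD]
        have hz : (0:ℝ)^(n-m-(n-j)) = 0 := by
          apply zero_pow; omega
        simp [eval_pow, hz]
    · intro hnm
      exact absurd (Finset.mem_range.mpr (by omega)) hnm
  ext m
  rcases le_or_gt m n with hm | hm
  · simp [hcoeff m hm]
  · rw [coeff_zero]
    exact coeff_eq_zero_of_degree_lt (lt_of_le_of_lt hx (by exact_mod_cast Nat.cast_lt.mpr hm))


lemma withbot_le (k j : ℕ) : ((k:ℕ) : WithBot ℕ) ≤ (j : WithBot ℕ) ↔ k ≤ j := by
  simp [Nat.cast_withBot]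

lemma withbot_lt (k j : ℕ) : ((k:ℕ) : WithBot ℕ) < (j : WithBot ℕ) ↔ k < j := by
  simp [Nat.cast_withBot]

lemma degreeLE_eq_degreeLT (m : ℕ) : degreeLE ℝ (m : WithBot ℕ) = degreeLT ℝ (m+1) := by
  ext f
  rw [mem_degreeLE, mem_degreeLT]
  rcases eq_or_ne f 0 with rfl | hne
  · simp only [degree_zero]
    refine ⟨fun _ => ?_, fun _ => bot_le⟩
    rw [Nat.cast_withBot]
    exact WithBot.bot_lt_coe _
  · simp only [degree_eq_natDegree hne, Nat.cast_withBot, WithBot.coe_le_coe, WithBot.coe_lt_coe]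
    omega

noncomputable instance (m : ℕ) : FiniteDimensional ℝ ↥(degreeLE ℝ (m : WithBot ℕ)) := by
  rw [degreeLE_eq_degreeLT]
  exact Module.Finite.equiv (degreeLTEquiv ℝ (m+1)).symm

lemma finrank_degreeLE (m : ℕ) :
    finrank ℝ ↥(degreeLE ℝ (m : WithBot ℕ)) = m + 1 := by
  rw [degreeLE_eq_degreeLT]
  rw [LinearEquiv.finrank_eq (degreeLTEquiv ℝ (m+1))]
  exact Module.finrank_fin_fun ℝ

lemma mulLeft_injective {g : ℝ[X]} (hg : g ≠ 0) :
    Function.Injective (LinearMap.mulLeft ℝ g) := fun x y h =>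
  mul_left_cancel₀ hg (by simpa [LinearMap.mulLeft_apply] using h)

/-- The image of `degreeLT r` under multiplication by `g` sits inside `degreeLE n`
provided `natDegree g + r ≤ n + 1`. -/
lemma map_mulLeft_degreeLT_le (n : ℕ) (g : ℝ[X]) (r : ℕ) (h : r = 0 ∨ g.natDegree + r ≤ n + 1) :
    Submodule.map (LinearMap.mulLeft ℝ g) (degreeLT ℝ r) ≤ degreeLE ℝ (n : WithBot ℕ) := by
  rintro x ⟨hpoly, hmem, rfl⟩
  rw [SetLike.mem_coe, mem_degreeLT] at hmem
  rw [mem_degreeLE, LinearMap.mulLeft_apply]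
  rcases eq_or_ne hpoly 0 with rfl | hne
  · simp
  rcases eq_or_ne g 0 with rfl | hgne
  · simp
  have h1 : hpoly.natDegree < r := by
    have := hmem
    rw [degree_eq_natDegree hne] at this
    exact_mod_cast this
  have h2 : (g * hpoly).natDegree = g.natDegree + hpoly.natDegree :=
    natDegree_mul hgne hne
  rw [degree_eq_natDegree (mul_ne_zero hgne hne), h2]
  refine (withbot_le _ _).mpr ?_
  rcases h with rfl | h
  · omega
  · omega

/-- the submodule of multiples of `g` inside `degreeLE n` -/
lemma multiples_eq_map (n : ℕ) (g : ℝ[X]) (hg : g ≠ 0) :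
    Submodule.comap (degreeLE ℝ (n : WithBot ℕ)).subtype
        ((Ideal.span {g} : Ideal ℝ[X]).restrictScalars ℝ) =
      Submodule.comap (degreeLE ℝ (n : WithBot ℕ)).subtype
        (Submodule.map (LinearMap.mulLeft ℝ g) (degreeLT ℝ (n + 1 - g.natDegree))) := by
  ext x
  simp only [Submodule.mem_comap, Submodule.restrictScalars_mem, Ideal.mem_span_singleton,
    Submodule.mem_map, Submodule.subtype_apply]
  constructor
  · rintro ⟨c, hc⟩
    rcases eq_or_ne c 0 with rfl | hcne
    · exact ⟨0, by simp [mem_degreeLT], by simp [LinearMap.mulLeft_apply]; rw [hc]; ring⟩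
    · have hx : (x:ℝ[X]) ≠ 0 := by
        rw [hc]; exact mul_ne_zero hg hcne
      have hdeg : (x:ℝ[X]).natDegree ≤ n := by
        have := mem_degreeLE.mp x.2
        rw [degree_eq_natDegree hx] at this
        exact_mod_cast this
      have hnat : (x:ℝ[X]).natDegree = g.natDegree + c.natDegree := by
        rw [hc]; exact natDegree_mul hg hcne
      refine ⟨c, ?_, ?_⟩
      · rw [mem_degreeLT, degree_eq_natDegree hcne]
        exact (withbot_lt _ _).mpr (by omega)
      · rw [LinearMap.mulLeft_apply, ← hc]
  · rintro ⟨c, _, hc⟩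
    exact ⟨c, by rw [← hc, LinearMap.mulLeft_apply]⟩

lemma finrank_comap_map (n : ℕ) (g : ℝ[X]) (hg : g ≠ 0) (r : ℕ)
    (hle : Submodule.map (LinearMap.mulLeft ℝ g) (degreeLT ℝ r) ≤ degreeLE ℝ (n : WithBot ℕ)) :
    finrank ℝ ↥(Submodule.comap (degreeLE ℝ (n : WithBot ℕ)).subtype
      (Submodule.map (LinearMap.mulLeft ℝ g) (degreeLT ℝ r))) = r := by
  rw [LinearEquiv.finrank_eq (Submodule.comapSubtypeEquivOfLe hle)]
  rw [← LinearEquiv.finrank_eq (Submodule.equivMapOfInjective _ (mulLeft_injective hg)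
    (degreeLT ℝ r))]
  rw [LinearEquiv.finrank_eq (degreeLTEquiv ℝ r)]
  exact Module.finrank_fin_fun ℝ

lemma finrank_multiples (n : ℕ) (g : ℝ[X]) (hg : g ≠ 0) :
    finrank ℝ ↥(Submodule.comap (degreeLE ℝ (n : WithBot ℕ)).subtype
        ((Ideal.span {g} : Ideal ℝ[X]).restrictScalars ℝ)) = n + 1 - g.natDegree := by
  rw [multiples_eq_map n g hg]
  exact finrank_comap_map n g hg (n + 1 - g.natDegree)
    (map_mulLeft_degreeLT_le n g (n + 1 - g.natDegree) (by omega))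


end AuxSP

/-- for pairwise distinct points `a_1, …, a_l` and `d_i ≤ n`, the quotient space
`U_n / ∑_{i=1}^l (u - a_i)^{d_i} · U_{n - d_i}` has dimension
`max (0) (n + 1 - ∑_i (n - d_i + 1))`. -/
theorem finrank_quotient_sum_shifted_powers
    (n l : ℕ) (a : Fin l → ℝ) (ha : Function.Injective a)
    (d : Fin l → ℕ) (hd : ∀ i, d i ≤ n) :
    (Module.finrank ℝ
        (↥(Polynomial.degreeLE ℝ (n : WithBot ℕ)) ⧸
          Submodule.comap (Polynomial.degreeLE ℝ (n : WithBot ℕ)).subtype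
            (⨆ i : Fin l, Submodule.span ℝ
              {p : Polynomial ℝ | ∃ h ∈ Polynomial.degreeLE ℝ ((n - d i : ℕ) : WithBot ℕ),
                p = (Polynomial.X - Polynomial.C (a i)) ^ (d i) * h})) : ℤ) =
      max 0 ((n : ℤ) + 1 - ∑ i, ((n : ℤ) - (d i : ℤ) + 1)) := by
  classical
  open Polynomial Module Submodule AuxSP in
  set V : Submodule ℝ ℝ[X] := degreeLE ℝ (n : WithBot ℕ) with hV
  have hfne : ∀ i, ((X - C (a i)) ^ (d i) : ℝ[X]) ≠ 0 :=
    fun i => pow_ne_zero _ (X_sub_C_ne_zero (a i))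
  have hgne : ∀ i, ((X - C (a i)) ^ (n - d i + 1) : ℝ[X]) ≠ 0 :=
    fun i => pow_ne_zero _ (X_sub_C_ne_zero (a i))
  set G : ℝ[X] := ∏ i, (X - C (a i)) ^ (n - d i + 1) with hG
  have hGne : G ≠ 0 := Finset.prod_ne_zero_iff.mpr fun i _ => hgne i
  have hfdeg : ∀ i, ((X - C (a i)) ^ (d i) : ℝ[X]).natDegree = d i := by
    intro i; simp [natDegree_pow]
  have hgdeg : ∀ i, ((X - C (a i)) ^ (n - d i + 1) : ℝ[X]).natDegree = n - d i + 1 := by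
    intro i; simp [natDegree_pow]
  have hGdeg : G.natDegree = ∑ i, (n - d i + 1) := by
    rw [hG, natDegree_prod _ _ (fun i _ => hgne i)]
    exact Finset.sum_congr rfl fun i _ => hgdeg i
  set M : Fin l → Submodule ℝ ℝ[X] := fun i =>
    Submodule.map (LinearMap.mulLeft ℝ ((X - C (a i)) ^ (d i)))
      (degreeLE ℝ ((n - d i : ℕ) : WithBot ℕ)) with hM
  -- Step A : the spans in the statement are the `M i`
  have hspan : ∀ i : Fin l, Submodule.span ℝ
      {p : ℝ[X] | ∃ h ∈ degreeLE ℝ ((n - d i : ℕ) : WithBot ℕ),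
        p = (X - C (a i)) ^ (d i) * h} = M i := by
    intro i
    have hset : {p : ℝ[X] | ∃ h ∈ degreeLE ℝ ((n - d i : ℕ) : WithBot ℕ),
        p = (X - C (a i)) ^ (d i) * h} = ↑(M i) := by
      ext p
      simp only [Set.mem_setOf_eq, hM, SetLike.mem_coe, Submodule.mem_map,
        LinearMap.mulLeft_apply, eq_comm]
    rw [hset, Submodule.span_eq]
  -- Step B : `M i ≤ V`
  have hMle : ∀ i, M i ≤ V := by
    intro i
    simp only [hM, hV, degreeLE_eq_degreeLT (n - d i)]
    exact map_mulLeft_degreeLT_le n _ _ (Or.inr (by rw [hfdeg i]; have := hd i; omega))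
  have hSle : (⨆ i, M i) ≤ V := iSup_le hMle
  -- W i and SV
  set W : Fin l → Submodule ℝ ↥V := fun i => Submodule.comap V.subtype (M i) with hW
  set SV : Submodule ℝ ↥V := Submodule.comap V.subtype (⨆ i, M i) with hSV
  have hSVsup : SV = ⨆ i, W i := by
    apply Submodule.map_injective_of_injective (Submodule.injective_subtype V)
    rw [hSV, Submodule.map_comap_subtype, Submodule.map_iSup]
    rw [inf_of_le_right hSle]
    refine (iSup_congr fun i => ?_).symm
    simp only [hW]
    rw [Submodule.map_comap_subtype, inf_of_le_right (hMle i)]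
  -- the bilinear form
  set B : LinearMap.BilinForm ℝ ↥V := LinearMap.compl₁₂ (Braw n) V.subtype V.subtype with hB
  have hBapp : ∀ x y : ↥V, B x y = Braw n ↑x ↑y := fun x y => rfl
  have hdegV : ∀ x : ↥V, (x : ℝ[X]).natDegree ≤ n := fun x =>
    natDegree_le_iff_degree_le.mpr (mem_degreeLE.mp x.2)
  have hRefl : B.IsRefl := by
    intro x y hxy
    have h' : Braw n (x : ℝ[X]) (y : ℝ[X]) = 0 := hxy
    show Braw n (y : ℝ[X]) (x : ℝ[X]) = 0
    rw [Braw_flip, h', mul_zero]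
  have hNondeg : B.Nondegenerate := by
    refine (LinearMap.IsRefl.nondegenerate_iff_separatingLeft hRefl).mpr ?_
    intro x hx
    apply Subtype.ext
    refine Braw_eq_zero_right (n := n) (mem_degreeLE.mp x.2) fun y hy => ?_
    exact hx ⟨y, mem_degreeLE.mpr hy⟩
  -- T i and T
  set T : Fin l → Submodule ℝ ↥V := fun i =>
    Submodule.comap V.subtype
      ((Ideal.span {(X - C (a i)) ^ (n - d i + 1)} : Ideal ℝ[X]).restrictScalars ℝ) with hT
  set TG : Submodule ℝ ↥V :=
    Submodule.comap V.subtype ((Ideal.span {G} : Ideal ℝ[X]).restrictScalars ℝ) with hTG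
  -- finranks of building blocks
  have hfinW : ∀ i, finrank ℝ ↥(W i) = n - d i + 1 := by
    intro i
    have hWeq : W i = Submodule.comap V.subtype
        (Submodule.map (LinearMap.mulLeft ℝ ((X - C (a i)) ^ (d i)))
          (degreeLT ℝ (n - d i + 1))) := by
      simp only [hW, hM, degreeLE_eq_degreeLT (n - d i)]
    rw [hWeq, hV]
    refine finrank_comap_map n _ (hfne i) (n - d i + 1) ?_
    exact map_mulLeft_degreeLT_le n _ _ (Or.inr (by rw [hfdeg i]; have := hd i; omega))
  have hfinT : ∀ i, finrank ℝ ↥(T i) = d i := by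
    intro i
    have e1 : T i = Submodule.comap V.subtype
        ((Ideal.span {(X - C (a i)) ^ (n - d i + 1)} : Ideal ℝ[X]).restrictScalars ℝ) :=
      congrFun hT i
    rw [e1, hV]
    have h2 := finrank_multiples n _ (hgne i)
    rw [hgdeg i] at h2
    rw [h2]
    have := hd i
    omega
  have hfinV : finrank ℝ ↥V = n + 1 := by rw [hV]; exact finrank_degreeLE n
  have horthtop : B.orthogonal ⊤ = ⊥ := LinearMap.BilinForm.orthogonal_top_eq_bot hNondeg
  -- Step E : orthogonal of W i is T i
  have horthW : ∀ i, B.orthogonal (W i) = T i := by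
    intro i
    have hTle : T i ≤ B.orthogonal (W i) := by
      intro x hx
      rw [LinearMap.BilinForm.mem_orthogonal_iff]
      intro y hy
      simp only [hT, Submodule.mem_comap, Submodule.restrictScalars_mem,
        Ideal.mem_span_singleton, Submodule.subtype_apply] at hx
      obtain ⟨s, hs⟩ := hx
      simp only [hW, hM, Submodule.mem_comap, Submodule.mem_map, SetLike.mem_coe,
        LinearMap.mulLeft_apply, Submodule.subtype_apply] at hy
      obtain ⟨h, -, hh⟩ := hy
      show B y x = 0
      rw [hBapp]
      have hyd : ((X - C (a i)) ^ (d i) * h).natDegree ≤ n := by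
        rw [hh]; exact hdegV y
      have hxd : ((X - C (a i)) ^ (n - d i + 1) * s).natDegree ≤ n := by
        rw [← hs]; exact hdegV x
      rw [← hh, hs]
      exact Braw_eq_zero (by have := hd i; omega) hyd hxd
    refine (Submodule.eq_of_le_of_finrank_le hTle ?_).symm
    have h1 := LinearMap.BilinForm.finrank_add_finrank_orthogonal hRefl (W := W i)
    rw [horthtop, inf_bot_eq, finrank_bot, add_zero, hfinV, hfinW i] at h1
    rw [hfinT i]
    have := hd i
    omega
  -- Step F : orthogonal of SV is TG
  have horthS : B.orthogonal SV = TG := by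
    rw [hSVsup]
    ext x
    constructor
    · intro hx
      have hxi : ∀ i, x ∈ T i := fun i =>
        (horthW i) ▸ (LinearMap.BilinForm.orthogonal_le (le_iSup W i)) hx
      simp only [hTG, Submodule.mem_comap, Submodule.restrictScalars_mem,
        Ideal.mem_span_singleton, Submodule.subtype_apply]
      have hdvd : ∀ i, (X - C (a i)) ^ (n - d i + 1) ∣ (x : ℝ[X]) := by
        intro i
        have h3 := hxi i
        simp only [hT, Submodule.mem_comap, Submodule.restrictScalars_mem,
          Ideal.mem_span_singleton, Submodule.subtype_apply] at h3
        exact h3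
      have hpair : Pairwise (Function.onFun IsCoprime fun i => X - C (a i)) :=
        pairwise_coprime_X_sub_C ha
      have hpair2 : Pairwise (Function.onFun IsCoprime fun i => ((X - C (a i)) ^ (n - d i + 1) : ℝ[X])) :=
        fun i j hij => by
          have := (hpair hij).pow (m := n - d i + 1) (n := n - d j + 1)
          simpa [Function.onFun] using this
      rw [hG]
      exact Finset.prod_dvd_of_coprime (hpair2.set_pairwise _) fun i _ => hdvd i
    · intro hx
      have hxi : ∀ i, x ∈ B.orthogonal (W i) := by
        intro i
        rw [horthW i]
        simp only [hT, Submodule.mem_comap, Submodule.restrictScalars_mem,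
          Ideal.mem_span_singleton, Submodule.subtype_apply]
        simp only [hTG, Submodule.mem_comap, Submodule.restrictScalars_mem,
          Ideal.mem_span_singleton, Submodule.subtype_apply] at hx
        refine dvd_trans ?_ hx
        rw [hG]
        exact Finset.dvd_prod_of_mem _ (Finset.mem_univ i)
      rw [LinearMap.BilinForm.mem_orthogonal_iff]
      intro y hy
      have hker : (⨆ i, W i) ≤ LinearMap.ker (B.flip x) := by
        refine iSup_le fun i => fun z hz => ?_
        exact (hxi i) z hz
      exact hker hy
  -- final dimension count
  have hfinTG : finrank ℝ ↥TG = n + 1 - ∑ i, (n - d i + 1) := by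
    rw [hTG, hV]
    have h4 := finrank_multiples n G hGne
    rw [hGdeg] at h4
    exact h4
  have h2 := LinearMap.BilinForm.finrank_add_finrank_orthogonal hRefl (W := SV)
  rw [horthtop, inf_bot_eq, finrank_bot, add_zero, hfinV, horthS, hfinTG] at h2
  have hgoal : (⨆ i, Submodule.span ℝ
      {p : ℝ[X] | ∃ h ∈ degreeLE ℝ ((n - d i : ℕ) : WithBot ℕ),
        p = (X - C (a i)) ^ (d i) * h}) = ⨆ i, M i := iSup_congr hspan
  rw [hgoal, ← hSV]
  have h1 := Submodule.finrank_quotient_add_finrank SV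
  rw [hfinV] at h1
  have hNsum : ∑ i, ((n:ℤ) - (d i : ℤ) + 1) = ((∑ i, (n - d i + 1) : ℕ) : ℤ) := by
    rw [Nat.cast_sum]
    refine Finset.sum_congr rfl fun i _ => ?_
    have := hd i
    push_cast [Nat.cast_sub this]
    ring
  rw [hNsum]
  omega
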